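/- arXiv:2512.24906 — 4 statements merged into one kernel-verified Lean document; each statement's English description precedes it below -/
import Mathlib

section
/- In the Gaussian setting, define M = ((Σ⁻¹)_X)⁻¹ Cᵀ c_Y and u(x, y) = −½ M ( (Σ⁻¹)_{YX} x + (Σ⁻¹)_Y y ) p_Σ(x, y). Then for every (x, y) ∈ ℝ^d × ℝ^m, div_x u(x, y) = −½ div_y( g(x, ·) )(y), where g(x, y) = c_Y C ( x − Σ_{XY} (Σ_Y)⁻¹ y ) p_Σ(x, y), div_x denotes the divergence in x of the ℝ^d-valued map x ↦ u(x, y), and div_y denotes the divergence in y of the ℝ^m-valued map y ↦ g(x, y). -/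
open Matrix MeasureTheory

/-- The centered Gaussian density on `ℝ^n` with covariance matrix `S`. -/
noncomputable def gaussDensity {n : Type*} [Fintype n] [DecidableEq n]
    (S : Matrix n n ℝ) (w : n → ℝ) : ℝ :=
  (2 * Real.pi) ^ (-(Fintype.card n : ℝ) / 2) * S.det ^ (-(1 : ℝ) / 2) *
    Real.exp (-(1 / 2 : ℝ) * (w ⬝ᵥ (S⁻¹ *ᵥ w)))

section Aux

set_option linter.unusedSectionVars false

variable {n : Type*} [Fintype n] [DecidableEq n]

/-- Dot product with a fixed vector, as a continuous linear map. -/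
noncomputable def dotCLM (v : n → ℝ) : (n → ℝ) →L[ℝ] ℝ :=
  ∑ i, v i • (ContinuousLinearMap.proj i : (n → ℝ) →L[ℝ] ℝ)

lemma dotCLM_apply (v h : n → ℝ) : dotCLM v h = v ⬝ᵥ h := by
  simp [dotCLM, dotProduct, ContinuousLinearMap.sum_apply]

lemma hasFDerivAt_quadForm (S : Matrix n n ℝ) (w : n → ℝ) :
    HasFDerivAt (fun w : n → ℝ => w ⬝ᵥ S *ᵥ w) (dotCLM (S *ᵥ w + Sᵀ *ᵥ w)) w := by
  have hfun : (fun w : n → ℝ => w ⬝ᵥ S *ᵥ w)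
      = fun w : n → ℝ => ∑ i, ∑ j, S i j * (w i * w j) := by
    funext w
    simp [dotProduct, mulVec, Finset.mul_sum]
    congr 1; funext i; congr 1; funext j; ring
  rw [hfun]
  have h1 : ∀ i j : n, HasFDerivAt (fun w : n → ℝ => S i j * (w i * w j))
      (S i j • (w i • (ContinuousLinearMap.proj j : (n → ℝ) →L[ℝ] ℝ)
        + w j • (ContinuousLinearMap.proj i : (n → ℝ) →L[ℝ] ℝ))) w := by
    intro i j
    have hi : HasFDerivAt (fun w : n → ℝ => w i)
        (ContinuousLinearMap.proj i : (n → ℝ) →L[ℝ] ℝ) w :=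
      (ContinuousLinearMap.proj i : (n → ℝ) →L[ℝ] ℝ).hasFDerivAt
    have hj : HasFDerivAt (fun w : n → ℝ => w j)
        (ContinuousLinearMap.proj j : (n → ℝ) →L[ℝ] ℝ) w :=
      (ContinuousLinearMap.proj j : (n → ℝ) →L[ℝ] ℝ).hasFDerivAt
    exact ((hi.mul hj).const_mul (S i j))
  have := HasFDerivAt.fun_sum (fun i (_ : i ∈ Finset.univ) =>
    HasFDerivAt.fun_sum (fun j (_ : j ∈ Finset.univ) => h1 i j))
  refine this.congr_fderiv (Eq.symm ?_)
  apply ContinuousLinearMap.ext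
  intro h
  simp only [dotCLM_apply, ContinuousLinearMap.sum_apply, ContinuousLinearMap.smul_apply,
    ContinuousLinearMap.add_apply, ContinuousLinearMap.proj_apply, smul_eq_mul]
  simp only [dotProduct, Pi.add_apply, mulVec, transpose_apply, add_mul, Finset.sum_add_distrib,
    Finset.sum_mul]
  simp only [mul_add, Finset.sum_add_distrib]
  rw [add_comm]
  congr 1
  · rw [Finset.sum_comm]
    congr 1; funext i; congr 1; funext j; ring
  · congr 1; funext i; congr 1; funext j; ring

lemma hasFDerivAt_gaussDensity (S : Matrix n n ℝ) (hS : (S⁻¹)ᵀ = S⁻¹) (w : n → ℝ) :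
    HasFDerivAt (gaussDensity S) ((-(gaussDensity S w)) • dotCLM (S⁻¹ *ᵥ w)) w := by
  set K : ℝ := (2 * Real.pi) ^ (-(Fintype.card n : ℝ) / 2) * S.det ^ (-(1 : ℝ) / 2) with hK
  have h1 := (hasFDerivAt_quadForm S⁻¹ w).const_mul (-(1 / 2 : ℝ))
  have h2 := (h1.exp).const_mul K
  have hfun : (fun w : n → ℝ => K * Real.exp (-(1/2 : ℝ) * (w ⬝ᵥ S⁻¹ *ᵥ w)))
      = gaussDensity S := by
    funext w; simp [gaussDensity, hK, mul_assoc]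
  rw [hfun] at h2
  refine h2.congr_fderiv (Eq.symm ?_)
  apply ContinuousLinearMap.ext
  intro h
  simp only [ContinuousLinearMap.smul_apply, dotCLM_apply, smul_eq_mul, hS]
  have : (S⁻¹ *ᵥ w + S⁻¹ *ᵥ w) ⬝ᵥ h = 2 * ((S⁻¹ *ᵥ w) ⬝ᵥ h) := by
    simp [add_dotProduct]; ring
  rw [this, gaussDensity]
  ring

end Aux

section Blocks

set_option linter.unusedSectionVars false

variable {α β : Type*} [Fintype α] [Fintype β] [DecidableEq α] [DecidableEq β]

lemma mulVec_elim_inl (S : Matrix (α ⊕ β) (α ⊕ β) ℝ) (x : α → ℝ) (y : β → ℝ) (i : α) :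
    (S *ᵥ Sum.elim x y) (Sum.inl i) = (S.toBlocks₁₁ *ᵥ x + S.toBlocks₁₂ *ᵥ y) i := by
  simp [mulVec, dotProduct, Fintype.sum_sum_type, toBlocks₁₁, toBlocks₁₂]

lemma mulVec_elim_inr (S : Matrix (α ⊕ β) (α ⊕ β) ℝ) (x : α → ℝ) (y : β → ℝ) (j : β) :
    (S *ᵥ Sum.elim x y) (Sum.inr j) = (S.toBlocks₂₁ *ᵥ x + S.toBlocks₂₂ *ᵥ y) j := by
  simp [mulVec, dotProduct, Fintype.sum_sum_type, toBlocks₂₁, toBlocks₂₂]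

lemma dot_elim_single_left (v : α ⊕ β → ℝ) (i : α) :
    v ⬝ᵥ Sum.elim (Pi.single i 1) 0 = v (Sum.inl i) := by
  simp [dotProduct, Fintype.sum_sum_type, Pi.single_apply]

lemma dot_elim_single_right (v : α ⊕ β → ℝ) (j : β) :
    v ⬝ᵥ Sum.elim 0 (Pi.single j 1) = v (Sum.inr j) := by
  simp [dotProduct, Fintype.sum_sum_type, Pi.single_apply]

lemma posDef_toBlocks₁₁ {S : Matrix (α ⊕ β) (α ⊕ β) ℝ} (hS : S.PosDef) :
    S.toBlocks₁₁.PosDef := by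
  refine Matrix.PosDef.of_dotProduct_mulVec_pos ?_ ?_
  · ext i j
    have := congrFun (congrFun hS.1 (Sum.inl i)) (Sum.inl j)
    simpa [conjTranspose_apply, toBlocks₁₁] using this
  · intro x hx
    have hx' : Sum.elim x (0 : β → ℝ) ≠ 0 := by
      intro h
      apply hx
      funext i
      exact congrFun h (Sum.inl i)
    have := hS.dotProduct_mulVec_pos hx'
    convert this using 1
    simp [dotProduct, Fintype.sum_sum_type, mulVec, toBlocks₁₁]

lemma posDef_toBlocks₂₂ {S : Matrix (α ⊕ β) (α ⊕ β) ℝ} (hS : S.PosDef) :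
    S.toBlocks₂₂.PosDef := by
  refine Matrix.PosDef.of_dotProduct_mulVec_pos ?_ ?_
  · ext i j
    have := congrFun (congrFun hS.1 (Sum.inr i)) (Sum.inr j)
    simpa [conjTranspose_apply, toBlocks₂₂] using this
  · intro x hx
    have hx' : Sum.elim (0 : α → ℝ) x ≠ 0 := by
      intro h
      apply hx
      funext i
      exact congrFun h (Sum.inr i)
    have := hS.dotProduct_mulVec_pos hx'
    convert this using 1
    simp [dotProduct, Fintype.sum_sum_type, mulVec, toBlocks₂₂]

lemma toBlocks₁₂_mul (A B : Matrix (α ⊕ β) (α ⊕ β) ℝ) :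
    (A * B).toBlocks₁₂ = A.toBlocks₁₁ * B.toBlocks₁₂ + A.toBlocks₁₂ * B.toBlocks₂₂ := by
  conv_lhs => rw [← fromBlocks_toBlocks A, ← fromBlocks_toBlocks B, fromBlocks_multiply]
  rfl

lemma toBlocks₁₂_one : (1 : Matrix (α ⊕ β) (α ⊕ β) ℝ).toBlocks₁₂ = 0 := by
  rw [← @fromBlocks_one α β ℝ _ _ _ _]
  rfl

noncomputable def inlCLM (α β : Type*) [Fintype α] [Fintype β] :
    (α → ℝ) →L[ℝ] (α ⊕ β → ℝ) :=
  ContinuousLinearMap.pi (fun k => Sum.rec (fun i => ContinuousLinearMap.proj i)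
    (fun _ => 0) k)

lemma inlCLM_apply (h : α → ℝ) : inlCLM α β h = Sum.elim h 0 := by
  funext k; cases k <;> simp [inlCLM]

noncomputable def inrCLM (α β : Type*) [Fintype α] [Fintype β] :
    (β → ℝ) →L[ℝ] (α ⊕ β → ℝ) :=
  ContinuousLinearMap.pi (fun k => Sum.rec (fun _ => 0)
    (fun j => ContinuousLinearMap.proj j) k)

lemma inrCLM_apply (h : β → ℝ) : inrCLM α β h = Sum.elim (0 : α → ℝ) h := by
  funext k; cases k <;> simp [inrCLM]

lemma hasFDerivAt_elim_left (y : β → ℝ) (x : α → ℝ) :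
    HasFDerivAt (fun x' : α → ℝ => Sum.elim x' y) (inlCLM α β) x := by
  have : (fun x' : α → ℝ => Sum.elim x' y)
      = fun x' => inlCLM α β x' + Sum.elim (0 : α → ℝ) y := by
    funext x' k
    cases k <;> simp [inlCLM_apply]
  rw [this]
  exact (inlCLM α β).hasFDerivAt.add_const _

lemma hasFDerivAt_elim_right (x : α → ℝ) (y : β → ℝ) :
    HasFDerivAt (fun y' : β → ℝ => Sum.elim x y') (inrCLM α β) y := by
  have : (fun y' : β → ℝ => Sum.elim x y')
      = fun y' => inrCLM α β y' + Sum.elim x (0 : β → ℝ) := by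
    funext y' k
    cases k <;> simp [inrCLM_apply]
  rw [this]
  exact (inrCLM α β).hasFDerivAt.add_const _

end Blocks

/-- In the Gaussian setting, with `M = ((Σ⁻¹)_X)⁻¹ Cᵀ c_Y` and
`u(x, y) = −½ M ((Σ⁻¹)_{YX} x + (Σ⁻¹)_Y y) p_Σ(x, y)`, one has, for every
`(x, y) ∈ ℝ^d × ℝ^m`,  `div_x u(x, y) = −½ div_y( g(x, ·) )(y)` where
`g(x, y) = c_Y C (x − Σ_{XY} (Σ_Y)⁻¹ y) p_Σ(x, y)`. -/
theorem gaussian_divergence_equation_solution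
    (d m : ℕ) (hd : 1 ≤ d) (hm : 1 ≤ m)
    (c Sig : Matrix (Fin d ⊕ Fin m) (Fin d ⊕ Fin m) ℝ)
    (hc : c.PosDef) (hSig : Sig.PosDef)
    (βX : Matrix (Fin m) (Fin d) ℝ)
    (C : Matrix (Fin m) (Fin d) ℝ)
    (hC : C = Sig⁻¹.toBlocks₂₁ + (c.toBlocks₂₂)⁻¹ * c.toBlocks₂₁ * Sig⁻¹.toBlocks₁₁ + βX)
    (M : Matrix (Fin d) (Fin m) ℝ)
    (hM : M = (Sig⁻¹.toBlocks₁₁)⁻¹ * Cᵀ * c.toBlocks₂₂)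
    (u : (Fin d → ℝ) → (Fin m → ℝ) → (Fin d → ℝ))
    (hu : ∀ x y, u x y = -((1 / 2 : ℝ) * gaussDensity Sig (Sum.elim x y)) •
      (M *ᵥ (Sig⁻¹.toBlocks₂₁ *ᵥ x + Sig⁻¹.toBlocks₂₂ *ᵥ y)))
    (g : (Fin d → ℝ) → (Fin m → ℝ) → (Fin m → ℝ))
    (hg : ∀ x y, g x y = gaussDensity Sig (Sum.elim x y) •
      (c.toBlocks₂₂ *ᵥ (C *ᵥ (x - Sig.toBlocks₁₂ *ᵥ ((Sig.toBlocks₂₂)⁻¹ *ᵥ y))))) :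
    ∀ (x : Fin d → ℝ) (y : Fin m → ℝ),
      (∑ i : Fin d, fderiv ℝ (fun x' => u x' y i) x (Pi.single i 1))
        = -(1 / 2 : ℝ) * ∑ j : Fin m, fderiv ℝ (fun y' => g x y' j) y (Pi.single j 1) := by
  intro x y
  -- Symmetry facts
  have hSigT : Sigᵀ = Sig := by
    ext i j
    have := congrFun (congrFun hSig.1 i) j
    simpa [conjTranspose_apply] using this
  have hcT : cᵀ = c := by
    ext i j
    have := congrFun (congrFun hc.1 i) j
    simpa [conjTranspose_apply] using this
  have hSsymm : (Sig⁻¹)ᵀ = Sig⁻¹ := by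
    rw [transpose_nonsing_inv, hSigT]
  have hSinv : (Sig⁻¹).PosDef := hSig.inv
  -- Names for blocks
  set E := Sig⁻¹.toBlocks₁₁ with hEdef
  set S12 := Sig⁻¹.toBlocks₁₂ with hS12def
  set S21 := Sig⁻¹.toBlocks₂₁ with hS21def
  set S22 := Sig⁻¹.toBlocks₂₂ with hS22def
  set G12 := Sig.toBlocks₁₂ with hG12def
  set GY := Sig.toBlocks₂₂ with hGYdef
  set cY := c.toBlocks₂₂ with hcYdef
  set T : Matrix (Fin m) (Fin m) ℝ := cY * C * G12 * GY⁻¹ with hTdef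
  set p : ℝ := gaussDensity Sig (Sum.elim x y) with hpdef
  set v : Fin d ⊕ Fin m → ℝ := Sig⁻¹ *ᵥ Sum.elim x y with hvdef
  set vX : Fin d → ℝ := fun i => v (Sum.inl i) with hvXdef
  set vY : Fin m → ℝ := fun j => v (Sum.inr j) with hvYdef
  -- basic invertibility
  have hE : E.PosDef := posDef_toBlocks₁₁ hSinv
  have hGY : GY.PosDef := posDef_toBlocks₂₂ hSig
  have hEmul : E⁻¹ * E = 1 := nonsing_inv_mul _ hE.det_pos.ne'.isUnit
  have hEmul' : E * E⁻¹ = 1 := mul_nonsing_inv _ hE.det_pos.ne'.isUnit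
  have hGYmul : GY * GY⁻¹ = 1 := mul_nonsing_inv _ hGY.det_pos.ne'.isUnit
  -- block symmetry
  have hEsym : Eᵀ = E := by
    ext i j
    exact congrFun (congrFun hSsymm (Sum.inl i)) (Sum.inl j)
  have hEinvT : (E⁻¹)ᵀ = E⁻¹ := by rw [transpose_nonsing_inv, hEsym]
  have hGYsym : GYᵀ = GY := by
    ext i j
    exact congrFun (congrFun hSigT (Sum.inr i)) (Sum.inr j)
  have hGYinvT : (GY⁻¹)ᵀ = GY⁻¹ := by rw [transpose_nonsing_inv, hGYsym]
  have hcYsym : cYᵀ = cY := by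
    ext i j
    exact congrFun (congrFun hcT (Sum.inr i)) (Sum.inr j)
  have hS21T : S21 = S12ᵀ := by
    ext i j
    exact (congrFun (congrFun hSsymm (Sum.inr i)) (Sum.inl j)).symm
  -- the block identity E * G12 + S12 * GY = 0
  have hbl : E * G12 + S12 * GY = 0 := by
    have h := nonsing_inv_mul Sig hSig.det_pos.ne'.isUnit
    have h2 := congrArg Matrix.toBlocks₁₂ h
    rw [toBlocks₁₂_mul, toBlocks₁₂_one] at h2
    exact h2
  have hS12val : S12 = -(E * G12 * GY⁻¹) := by
    have h : (E * G12 + S12 * GY) * GY⁻¹ = 0 := by rw [hbl, Matrix.zero_mul]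
    rw [Matrix.add_mul, Matrix.mul_assoc S12, hGYmul, Matrix.mul_one] at h
    exact eq_neg_of_add_eq_zero_left (by rw [add_comm]; exact h)
  have hEinvS12 : E⁻¹ * S12 = -(G12 * GY⁻¹) := by
    rw [hS12val, Matrix.mul_neg]
    rw [show E * G12 * GY⁻¹ = E * (G12 * GY⁻¹) by rw [Matrix.mul_assoc]]
    rw [← Matrix.mul_assoc, hEmul, Matrix.one_mul]
  -- transpose of M
  have hMT : Mᵀ = cY * (C * E⁻¹) := by
    rw [hM]
    simp [transpose_mul, hcYsym, hEinvT, Matrix.mul_assoc]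
  -- r := x - G12 *ᵥ (GY⁻¹ *ᵥ y)
  have hvX : vX = E *ᵥ x + S12 *ᵥ y := by
    funext i
    exact mulVec_elim_inl Sig⁻¹ x y i
  have hr : E⁻¹ *ᵥ vX = x - G12 *ᵥ (GY⁻¹ *ᵥ y) := by
    rw [hvX, mulVec_add, mulVec_mulVec, mulVec_mulVec, hEmul, hEinvS12]
    simp [sub_eq_add_neg, Matrix.neg_mulVec, mulVec_mulVec]
  -- Identity B : vX ⬝ᵥ (M *ᵥ vY) = q ⬝ᵥ vY
  have hq : Mᵀ *ᵥ vX = cY *ᵥ (C *ᵥ (x - G12 *ᵥ (GY⁻¹ *ᵥ y))) := by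
    rw [hMT, ← hr]
    simp [mulVec_mulVec, Matrix.mul_assoc]
  have hIdB : ∑ i, (M *ᵥ vY) i * vX i
      = ∑ j, (cY *ᵥ (C *ᵥ (x - G12 *ᵥ (GY⁻¹ *ᵥ y)))) j * vY j := by
    have h1 : vX ⬝ᵥ (M *ᵥ vY) = (Mᵀ *ᵥ vX) ⬝ᵥ vY := by
      rw [dotProduct_mulVec, ← mulVec_transpose]
    rw [hq] at h1
    simpa [dotProduct, mul_comm] using h1
  -- Identity A : trace (M * S21) = - trace T
  have hIdA : ∑ i, (M * S21) i i = -(∑ j, T j j) := by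
    have e1 : M * S21 = -(E⁻¹ * ((Cᵀ * (cY * (GY⁻¹ * G12ᵀ))) * E)) := by
      rw [hM, hS21T, hS12val]
      simp only [transpose_neg, transpose_mul, hEsym, hGYinvT]
      simp [Matrix.mul_assoc, Matrix.mul_neg, Matrix.neg_mul]
    have e2 : Matrix.trace (E⁻¹ * ((Cᵀ * (cY * (GY⁻¹ * G12ᵀ))) * E))
        = Matrix.trace (Cᵀ * (cY * (GY⁻¹ * G12ᵀ))) := by
      rw [Matrix.trace_mul_comm]
      rw [Matrix.mul_assoc, hEmul', Matrix.mul_one]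
    have t1 : (Cᵀ * (cY * (GY⁻¹ * G12ᵀ)))ᵀ = G12 * (GY⁻¹ * (cY * C)) := by
      simp [transpose_mul, hcYsym, hGYinvT, Matrix.mul_assoc]
    have e3 : Matrix.trace (Cᵀ * (cY * (GY⁻¹ * G12ᵀ))) = Matrix.trace T := by
      rw [← Matrix.trace_transpose (Cᵀ * (cY * (GY⁻¹ * G12ᵀ))), t1,
        Matrix.trace_mul_comm]
      rw [show GY⁻¹ * (cY * C) * G12 = GY⁻¹ * (cY * C * G12) from by
        simp [Matrix.mul_assoc]]
      rw [Matrix.trace_mul_comm, hTdef]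
    have htr : ∀ (X : Matrix (Fin d) (Fin d) ℝ), Matrix.trace X = ∑ i, X i i := by
      intro X; simp [Matrix.trace, Matrix.diag]
    have htr' : ∀ (X : Matrix (Fin m) (Fin m) ℝ), Matrix.trace X = ∑ i, X i i := by
      intro X; simp [Matrix.trace, Matrix.diag]
    calc ∑ i, (M * S21) i i = Matrix.trace (M * S21) := (htr _).symm
      _ = -(Matrix.trace (E⁻¹ * ((Cᵀ * (cY * (GY⁻¹ * G12ᵀ))) * E))) := by
          rw [e1, Matrix.trace_neg]
      _ = -(Matrix.trace T) := by rw [e2, e3]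
      _ = -(∑ j, T j j) := by rw [htr']
  -- derivative of each component of u
  have key1 : ∀ i : Fin d, fderiv ℝ (fun x' => u x' y i) x (Pi.single i 1)
      = (-(1/2 : ℝ) * p) * ((M * S21) i i)
        + ((1/2 : ℝ) * p) * ((M *ᵥ vY) i * vX i) := by
    intro i
    have hP : HasFDerivAt (fun x' : Fin d → ℝ => gaussDensity Sig (Sum.elim x' y))
        (((-(p)) • dotCLM v).comp (inlCLM (Fin d) (Fin m))) x :=
      by have h := (hasFDerivAt_gaussDensity Sig hSsymm (Sum.elim x y)).comp x
           (hasFDerivAt_elim_left y x); exact h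
    have heqlin : (fun x' : Fin d → ℝ => (M *ᵥ (S21 *ᵥ x' + S22 *ᵥ y)) i)
        = fun x' => dotCLM ((M * S21) i) x' + (M *ᵥ (S22 *ᵥ y)) i := by
      funext x'
      rw [mulVec_add, Pi.add_apply, dotCLM_apply, mulVec_mulVec]
      rfl
    have hlin : HasFDerivAt (fun x' : Fin d → ℝ => (M *ᵥ (S21 *ᵥ x' + S22 *ᵥ y)) i)
        (dotCLM ((M * S21) i)) x := by
      rw [heqlin]
      exact (dotCLM ((M * S21) i)).hasFDerivAt.add_const _
    have hfu : (fun x' => u x' y i)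
        = fun x' => (-(1/2 : ℝ)) * gaussDensity Sig (Sum.elim x' y)
            * (M *ᵥ (S21 *ᵥ x' + S22 *ᵥ y)) i := by
      funext x'
      rw [hu]
      simp only [Pi.smul_apply, smul_eq_mul, Pi.neg_apply, neg_smul]
      ring
    have hprod := (hP.const_mul (-(1/2 : ℝ))).fun_mul hlin
    rw [← hfu] at hprod
    rw [hprod.fderiv]
    have hvy : S21 *ᵥ x + S22 *ᵥ y = vY := by
      funext j
      exact (mulVec_elim_inr Sig⁻¹ x y j).symm
    simp only [ContinuousLinearMap.add_apply, ContinuousLinearMap.smul_apply,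
      ContinuousLinearMap.coe_comp', Function.comp_apply, dotCLM_apply,
      inlCLM_apply, dot_elim_single_left, smul_eq_mul, hvy]
    have hdot : (M * S21) i ⬝ᵥ Pi.single i 1 = (M * S21) i i := by
      simp [dotProduct, Pi.single_apply]
    rw [hdot]
    rw [← hpdef]
    ring
  -- derivative of each component of g
  have key2 : ∀ j : Fin m, fderiv ℝ (fun y' => g x y' j) y (Pi.single j 1)
      = (-(p)) * (T j j)
        + (-(p)) * ((cY *ᵥ (C *ᵥ (x - G12 *ᵥ (GY⁻¹ *ᵥ y)))) j * vY j) := by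
    intro j
    have hP : HasFDerivAt (fun y' : Fin m → ℝ => gaussDensity Sig (Sum.elim x y'))
        (((-(p)) • dotCLM v).comp (inrCLM (Fin d) (Fin m))) y :=
      HasFDerivAt.comp y (hasFDerivAt_gaussDensity Sig hSsymm (Sum.elim x y))
        (hasFDerivAt_elim_right x y)
    have heqlin : (fun y' : Fin m → ℝ => (cY *ᵥ (C *ᵥ (x - G12 *ᵥ (GY⁻¹ *ᵥ y')))) j)
        = fun y' => dotCLM (-(T j)) y' + ((cY * C) *ᵥ x) j := by
      funext y'
      rw [dotCLM_apply]
      have : cY *ᵥ (C *ᵥ (x - G12 *ᵥ (GY⁻¹ *ᵥ y')))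
          = (cY * C) *ᵥ x - T *ᵥ y' := by
        rw [mulVec_sub, mulVec_sub, mulVec_mulVec, mulVec_mulVec, mulVec_mulVec,
          mulVec_mulVec, hTdef]
      rw [this]
      have hT : (T *ᵥ y') j = T j ⬝ᵥ y' := rfl
      simp [Pi.sub_apply, hT, neg_dotProduct]
      ring
    have hlin : HasFDerivAt (fun y' : Fin m → ℝ => (cY *ᵥ (C *ᵥ (x - G12 *ᵥ (GY⁻¹ *ᵥ y')))) j)
        (dotCLM (-(T j))) y := by
      rw [heqlin]
      exact (dotCLM (-(T j))).hasFDerivAt.add_const _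
    have hfg : (fun y' => g x y' j)
        = fun y' => gaussDensity Sig (Sum.elim x y')
            * (cY *ᵥ (C *ᵥ (x - G12 *ᵥ (GY⁻¹ *ᵥ y')))) j := by
      funext y'
      rw [hg]
      simp only [Pi.smul_apply, smul_eq_mul]
    have hP' : HasFDerivAt (fun y' : Fin m → ℝ => gaussDensity Sig (Sum.elim x y'))
        (((-(p)) • dotCLM v).comp (inrCLM (Fin d) (Fin m))) y := hP
    have hprod := hP'.fun_mul hlin
    rw [← hfg] at hprod
    rw [hprod.fderiv]
    simp only [ContinuousLinearMap.add_apply, ContinuousLinearMap.smul_apply,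
      ContinuousLinearMap.coe_comp', Function.comp_apply, dotCLM_apply,
      inrCLM_apply, dot_elim_single_right, smul_eq_mul]
    have hdot : (-(T j)) ⬝ᵥ Pi.single j 1 = -(T j j) := by
      simp [dotProduct, Pi.single_apply]
    rw [hdot]
    rw [← hpdef]
    ring
  -- put everything together
  rw [Finset.sum_congr rfl (fun i _ => key1 i), Finset.sum_congr rfl (fun j _ => key2 j)]
  rw [Finset.sum_add_distrib, Finset.sum_add_distrib, ← Finset.mul_sum, ← Finset.mul_sum,
    ← Finset.mul_sum, ← Finset.mul_sum]
  rw [hIdA, hIdB]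
  ring
end

section
/- In the Gaussian setting, the vector field w(x, y) = −½ (C⁰ x + D⁰ y) − ½ (c_Y)⁻¹ ((Σ⁻¹)_Y)⁻¹ Bᵀ c_X ( (Σ⁻¹)_X x + (Σ⁻¹)_{XY} y ) satisfies, for every (x, y) ∈ ℝ^d × ℝ^m, the identity div_y( c_Y ( ℓ_Y⁰(x, ·) − w(x, ·) ) p_Σ(x, ·) )(y) = −div_x( c_X ( ℓ_X(·, y) + ½ (Σ_X)⁻¹ (·) ) p_Σ(·, y) )(x), where ℓ_X(x, y) = −½ (A x + B y), ℓ_Y⁰(x, y) = −½ (C⁰ x + D⁰ y), div_y is the divergence in y of the indicated ℝ^m-valued map and div_x is the divergence in x of the indicated ℝ^d-valued map. -/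
open Matrix MeasureTheory

/- ### Auxiliary material -/

noncomputable def mulVecCLM {n ι : Type*} [Fintype n] [Fintype ι] [DecidableEq ι]
    (E : Matrix n ι ℝ) : (ι → ℝ) →L[ℝ] (n → ℝ) :=
  LinearMap.toContinuousLinearMap (Matrix.mulVecLin E)

@[simp] lemma mulVecCLM_apply {n ι : Type*} [Fintype n] [Fintype ι] [DecidableEq ι]
    (E : Matrix n ι ℝ) (u : ι → ℝ) : mulVecCLM E u = E *ᵥ u := rfl

lemma hasFDerivAt_quad {n : Type*} [Fintype n] [DecidableEq n]
    (M : Matrix n n ℝ) (z : n → ℝ) :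
    HasFDerivAt (fun w : n → ℝ => w ⬝ᵥ (M *ᵥ w))
      (∑ i : n, (z i • ((ContinuousLinearMap.proj i).comp (mulVecCLM M))
        + (M *ᵥ z) i • (ContinuousLinearMap.proj i : (n → ℝ) →L[ℝ] ℝ))) z := by
  have h1 : (fun w : n → ℝ => w ⬝ᵥ (M *ᵥ w)) = fun w => ∑ i, (w i) * (M *ᵥ w) i := by
    funext w; simp [dotProduct]
  rw [h1]
  apply HasFDerivAt.fun_sum
  intro i _
  have ha : HasFDerivAt (fun w : n → ℝ => w i)
      (ContinuousLinearMap.proj i : (n → ℝ) →L[ℝ] ℝ) z := hasFDerivAt_apply i z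
  have hb : HasFDerivAt (fun w : n → ℝ => (M *ᵥ w) i)
      ((ContinuousLinearMap.proj i).comp (mulVecCLM M)) z := by
    have := ((ContinuousLinearMap.proj i :
        (n → ℝ) →L[ℝ] ℝ).comp (mulVecCLM M)).hasFDerivAt (x := z)
    convert this using 1
    rfl
  exact ha.mul hb

lemma fderiv_gauss_affine {n ι : Type*} [Fintype n] [Fintype ι] [DecidableEq n] [DecidableEq ι]
    (S : Matrix n n ℝ) (hS : (S⁻¹)ᵀ = S⁻¹)
    (z₀ : n → ℝ) (E : Matrix n ι ℝ) (N : Matrix ι ι ℝ) (b : ι → ℝ)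
    (u₀ : ι → ℝ) (j : ι) (v : ι → ℝ) :
    fderiv ℝ (fun u => gaussDensity S (z₀ + E *ᵥ u) * ((N *ᵥ u + b) j)) u₀ v
      = gaussDensity S (z₀ + E *ᵥ u₀) *
        (-(((E *ᵥ v) ⬝ᵥ (S⁻¹ *ᵥ (z₀ + E *ᵥ u₀))) * ((N *ᵥ u₀ + b) j)) + (N *ᵥ v) j) := by
  set z := z₀ + E *ᵥ u₀ with hz
  have haff : HasFDerivAt (fun u : ι → ℝ => z₀ + E *ᵥ u) (mulVecCLM E) u₀ := by
    have := (mulVecCLM E).hasFDerivAt (x := u₀)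
    exact this.const_add z₀
  have hq := (hasFDerivAt_quad S⁻¹ z).comp u₀ haff
  have hgauss : HasFDerivAt (fun u : ι → ℝ => gaussDensity S (z₀ + E *ᵥ u))
      (((2 * Real.pi) ^ (-(Fintype.card n : ℝ) / 2) * S.det ^ (-(1 : ℝ) / 2)) •
        (Real.exp (-(1 / 2 : ℝ) * (z ⬝ᵥ (S⁻¹ *ᵥ z))) •
          ((-(1 / 2 : ℝ)) • ((∑ i : n, (z i • ((ContinuousLinearMap.proj i).comp (mulVecCLM S⁻¹))
            + (S⁻¹ *ᵥ z) i • (ContinuousLinearMap.proj i : (n → ℝ) →L[ℝ] ℝ))).comp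
            (mulVecCLM E))))) u₀ := by
    have h2 := ((hq.const_mul (-(1 / 2 : ℝ))).exp).const_mul
      ((2 * Real.pi) ^ (-(Fintype.card n : ℝ) / 2) * S.det ^ (-(1 : ℝ) / 2))
    exact h2
  have hlin : HasFDerivAt (fun u : ι → ℝ => (N *ᵥ u + b) j)
      ((ContinuousLinearMap.proj j).comp (mulVecCLM N)) u₀ := by
    have := (((ContinuousLinearMap.proj j :
        (ι → ℝ) →L[ℝ] ℝ).comp (mulVecCLM N)).hasFDerivAt (x := u₀)).add_const (b j)
    exact this
  have hprod := hgauss.mul hlin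
  rw [show (fun u : ι → ℝ => gaussDensity S (z₀ + E *ᵥ u) * (N *ᵥ u + b) j) = (fun u : ι → ℝ => gaussDensity S (z₀ + E *ᵥ u)) * (fun u : ι → ℝ => (N *ᵥ u + b) j) from rfl, hprod.fderiv]
  simp only [ContinuousLinearMap.add_apply, ContinuousLinearMap.smul_apply,
    ContinuousLinearMap.comp_apply, ContinuousLinearMap.proj_apply, mulVecCLM_apply,
    ContinuousLinearMap.coe_sum', Finset.sum_apply, smul_eq_mul, Pi.add_apply]
  have hsymm : z ⬝ᵥ (S⁻¹ *ᵥ (E *ᵥ v)) = (E *ᵥ v) ⬝ᵥ (S⁻¹ *ᵥ z) := by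
    rw [dotProduct_mulVec, ← mulVec_transpose, hS, dotProduct_comm]
  have hexp : ∑ i, (z i * (S⁻¹ *ᵥ (E *ᵥ v)) i + (S⁻¹ *ᵥ z) i * (E *ᵥ v) i)
      = 2 * ((E *ᵥ v) ⬝ᵥ (S⁻¹ *ᵥ z)) := by
    rw [Finset.sum_add_distrib]
    have e1 : ∑ i, z i * (S⁻¹ *ᵥ (E *ᵥ v)) i = z ⬝ᵥ (S⁻¹ *ᵥ (E *ᵥ v)) := rfl
    have e2 : ∑ i, (S⁻¹ *ᵥ z) i * (E *ᵥ v) i = (S⁻¹ *ᵥ z) ⬝ᵥ (E *ᵥ v) := rfl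
    rw [e1, e2, hsymm, dotProduct_comm ((S⁻¹ *ᵥ z)) (E *ᵥ v)]
    ring
  rw [hexp]
  simp only [gaussDensity]
  ring

def inlEmb (d m : ℕ) : Matrix (Fin d ⊕ Fin m) (Fin d) ℝ :=
  Matrix.of fun i k => if i = Sum.inl k then 1 else 0

def inrEmb (d m : ℕ) : Matrix (Fin d ⊕ Fin m) (Fin m) ℝ :=
  Matrix.of fun i k => if i = Sum.inr k then 1 else 0

lemma inlEmb_mulVec {d m : ℕ} (u : Fin d → ℝ) :
    inlEmb d m *ᵥ u = Sum.elim u (0 : Fin m → ℝ) := by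
  ext i
  cases i with
  | inl i => simp [inlEmb, mulVec, dotProduct]
  | inr i => simp [inlEmb, mulVec, dotProduct]

lemma inrEmb_mulVec {d m : ℕ} (u : Fin m → ℝ) :
    inrEmb d m *ᵥ u = Sum.elim (0 : Fin d → ℝ) u := by
  ext i
  cases i with
  | inl i => simp [inrEmb, mulVec, dotProduct]
  | inr i => simp [inrEmb, mulVec, dotProduct]

lemma sum_elim_add {d m : ℕ} (x : Fin d → ℝ) (y : Fin m → ℝ) :
    Sum.elim x y = Sum.elim x 0 + Sum.elim (0 : Fin d → ℝ) y := by
  ext i; cases i <;> simp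

lemma posDef_toBlocks₁₁_s9 {d m : ℕ} {M : Matrix (Fin d ⊕ Fin m) (Fin d ⊕ Fin m) ℝ}
    (h : M.PosDef) : M.toBlocks₁₁.PosDef := by
  refine posDef_iff_dotProduct_mulVec.mpr ⟨?_, ?_⟩
  · ext i j
    have := congrFun (congrFun h.1 (Sum.inl i)) (Sum.inl j)
    simpa [Matrix.conjTranspose_apply, Matrix.toBlocks₁₁] using this
  · intro v hv
    have hv' : Sum.elim v (0 : Fin m → ℝ) ≠ 0 := by
      intro hcontra
      apply hv
      funext i
      simpa using congrFun hcontra (Sum.inl i)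
    have h2 := (posDef_iff_dotProduct_mulVec.mp h).2 hv'
    have hmv : M *ᵥ Sum.elim v 0 =
        Sum.elim (M.toBlocks₁₁ *ᵥ v) (M.toBlocks₂₁ *ᵥ v) := by
      conv_lhs => rw [← fromBlocks_toBlocks M]
      rw [fromBlocks_mulVec]
      simp
    rw [hmv] at h2
    simpa [sumElim_dotProduct_sumElim] using h2

lemma posDef_toBlocks₂₂_s9 {d m : ℕ} {M : Matrix (Fin d ⊕ Fin m) (Fin d ⊕ Fin m) ℝ}
    (h : M.PosDef) : M.toBlocks₂₂.PosDef := by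
  refine posDef_iff_dotProduct_mulVec.mpr ⟨?_, ?_⟩
  · ext i j
    have := congrFun (congrFun h.1 (Sum.inr i)) (Sum.inr j)
    simpa [Matrix.conjTranspose_apply, Matrix.toBlocks₂₂] using this
  · intro v hv
    have hv' : Sum.elim (0 : Fin d → ℝ) v ≠ 0 := by
      intro hcontra
      apply hv
      funext i
      simpa using congrFun hcontra (Sum.inr i)
    have h2 := (posDef_iff_dotProduct_mulVec.mp h).2 hv'
    have hmv : M *ᵥ Sum.elim 0 v =
        Sum.elim (M.toBlocks₁₂ *ᵥ v) (M.toBlocks₂₂ *ᵥ v) := by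
      conv_lhs => rw [← fromBlocks_toBlocks M]
      rw [fromBlocks_mulVec]
      simp
    rw [hmv] at h2
    simpa [sumElim_dotProduct_sumElim] using h2

lemma transpose_eq_of_posDef {n' : Type*} [Fintype n'] {M : Matrix n' n' ℝ}
    (h : M.PosDef) : Mᵀ = M := by
  ext i j
  have := congrFun (congrFun h.1 i) j
  simpa [Matrix.conjTranspose_apply] using this

/-- In the Gaussian setting, the vector field
`w(x, y) = −½ (C⁰ x + D⁰ y) − ½ (c_Y)⁻¹ ((Σ⁻¹)_Y)⁻¹ Bᵀ c_X ((Σ⁻¹)_X x + (Σ⁻¹)_{XY} y)`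
satisfies, for every `(x, y) ∈ ℝ^d × ℝ^m`, the identity
`div_y( c_Y (ℓ_Y⁰(x, ·) − w(x, ·)) p_Σ(x, ·) )(y)
   = −div_x( c_X (ℓ_X(·, y) + ½ (Σ_X)⁻¹ (·)) p_Σ(·, y) )(x)`
where `ℓ_X(x, y) = −½ (A x + B y)` and `ℓ_Y⁰(x, y) = −½ (C⁰ x + D⁰ y)`. -/
theorem gaussian_worst_case_fokker_planck
    (d m : ℕ) (hd : 1 ≤ d) (hm : 1 ≤ m)
    (c Sig : Matrix (Fin d ⊕ Fin m) (Fin d ⊕ Fin m) ℝ)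
    (hc : c.PosDef) (hSig : Sig.PosDef)
    (A : Matrix (Fin d) (Fin d) ℝ)
    (hA : A = Sig⁻¹.toBlocks₁₁ + (c.toBlocks₁₁)⁻¹ * c.toBlocks₁₂ * Sig⁻¹.toBlocks₂₁)
    (B : Matrix (Fin d) (Fin m) ℝ)
    (hB : B = Sig⁻¹.toBlocks₁₂ + (c.toBlocks₁₁)⁻¹ * c.toBlocks₁₂ * Sig⁻¹.toBlocks₂₂)
    (C0 : Matrix (Fin m) (Fin d) ℝ)
    (hC0 : C0 = Sig⁻¹.toBlocks₂₁ + (c.toBlocks₂₂)⁻¹ * c.toBlocks₂₁ * Sig⁻¹.toBlocks₁₁)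
    (D0 : Matrix (Fin m) (Fin m) ℝ)
    (hD0 : D0 = Sig⁻¹.toBlocks₂₂ + (c.toBlocks₂₂)⁻¹ * c.toBlocks₂₁ * Sig⁻¹.toBlocks₁₂)
    (ℓX : (Fin d → ℝ) → (Fin m → ℝ) → (Fin d → ℝ))
    (hℓX : ∀ x y, ℓX x y = -((1 / 2 : ℝ) • (A *ᵥ x + B *ᵥ y)))
    (ℓY0 : (Fin d → ℝ) → (Fin m → ℝ) → (Fin m → ℝ))
    (hℓY0 : ∀ x y, ℓY0 x y = -((1 / 2 : ℝ) • (C0 *ᵥ x + D0 *ᵥ y)))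
    (w : (Fin d → ℝ) → (Fin m → ℝ) → (Fin m → ℝ))
    (hw : ∀ x y, w x y = -((1 / 2 : ℝ) • (C0 *ᵥ x + D0 *ᵥ y))
      - (1 / 2 : ℝ) • (((c.toBlocks₂₂)⁻¹ * (Sig⁻¹.toBlocks₂₂)⁻¹ * Bᵀ * c.toBlocks₁₁) *ᵥ
          (Sig⁻¹.toBlocks₁₁ *ᵥ x + Sig⁻¹.toBlocks₁₂ *ᵥ y))) :
    ∀ (x : Fin d → ℝ) (y : Fin m → ℝ),
      (∑ j : Fin m, fderiv ℝ (fun y' => gaussDensity Sig (Sum.elim x y') *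
          (c.toBlocks₂₂ *ᵥ (ℓY0 x y' - w x y')) j) y (Pi.single j 1))
        = -(∑ i : Fin d, fderiv ℝ (fun x' => gaussDensity Sig (Sum.elim x' y) *
            (c.toBlocks₁₁ *ᵥ (ℓX x' y + (1 / 2 : ℝ) • ((Sig.toBlocks₁₁)⁻¹ *ᵥ x'))) i)
          x (Pi.single i 1)) := by
  intro x y
  -- notation
  set S11 := Sig⁻¹.toBlocks₁₁ with hS11def
  set S12 := Sig⁻¹.toBlocks₁₂ with hS12def
  set S21 := Sig⁻¹.toBlocks₂₁ with hS21def
  set S22 := Sig⁻¹.toBlocks₂₂ with hS22def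
  set cX := c.toBlocks₁₁ with hcXdef
  set cY := c.toBlocks₂₂ with hcYdef
  set c12 := c.toBlocks₁₂ with hc12def
  -- positivity and invertibility
  have hSinv : (Sig⁻¹).PosDef := hSig.inv
  have hS22pd : S22.PosDef := posDef_toBlocks₂₂_s9 hSinv
  have hSXpd : (Sig.toBlocks₁₁).PosDef := posDef_toBlocks₁₁_s9 hSig
  have hcXpd : cX.PosDef := posDef_toBlocks₁₁_s9 hc
  have hcYpd : cY.PosDef := posDef_toBlocks₂₂_s9 hc
  haveI : Invertible S22 := invertibleOfIsUnitDet _ (isUnit_iff_ne_zero.2 hS22pd.det_pos.ne')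
  haveI : Invertible cX := invertibleOfIsUnitDet _ (isUnit_iff_ne_zero.2 hcXpd.det_pos.ne')
  haveI : Invertible cY := invertibleOfIsUnitDet _ (isUnit_iff_ne_zero.2 hcYpd.det_pos.ne')
  haveI : Invertible (Sig.toBlocks₁₁) :=
    invertibleOfIsUnitDet _ (isUnit_iff_ne_zero.2 hSXpd.det_pos.ne')
  -- symmetry facts
  have hSymm : (Sig⁻¹)ᵀ = Sig⁻¹ := by
    rw [Matrix.transpose_nonsing_inv, transpose_eq_of_posDef hSig]
  have hS21eq : S21 = S12ᵀ := by
    rw [hS21def, hS12def]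
    ext i j
    have := congrFun (congrFun hSymm (Sum.inl j)) (Sum.inr i)
    simpa [Matrix.toBlocks₂₁, Matrix.toBlocks₁₂, Matrix.transpose_apply] using this
  have hS22symm : S22ᵀ = S22 := transpose_eq_of_posDef hS22pd
  have hcXsymm : cXᵀ = cX := transpose_eq_of_posDef hcXpd
  -- Schur complement: (Sig.toBlocks₁₁)⁻¹ = S11 - S12 * S22⁻¹ * S21
  have hPS : Sig * Sig⁻¹ = 1 :=
    Matrix.mul_nonsing_inv _ (isUnit_iff_ne_zero.2 hSig.det_pos.ne')
  have hblocks : fromBlocks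
      (Sig.toBlocks₁₁ * S11 + Sig.toBlocks₁₂ * S21) (Sig.toBlocks₁₁ * S12 + Sig.toBlocks₁₂ * S22)
      (Sig.toBlocks₂₁ * S11 + Sig.toBlocks₂₂ * S21) (Sig.toBlocks₂₁ * S12 + Sig.toBlocks₂₂ * S22)
      = fromBlocks 1 0 0 1 := by
    rw [← fromBlocks_multiply, fromBlocks_toBlocks, fromBlocks_toBlocks, hPS, ← fromBlocks_one]
  have h11 : Sig.toBlocks₁₁ * S11 + Sig.toBlocks₁₂ * S21 = 1 := by
    have := congrArg Matrix.toBlocks₁₁ hblocks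
    rwa [Matrix.toBlocks_fromBlocks₁₁, Matrix.toBlocks_fromBlocks₁₁] at this
  have h12 : Sig.toBlocks₁₁ * S12 + Sig.toBlocks₁₂ * S22 = 0 := by
    have := congrArg Matrix.toBlocks₁₂ hblocks
    rwa [Matrix.toBlocks_fromBlocks₁₂, Matrix.toBlocks_fromBlocks₁₂] at this
  have hP12 : Sig.toBlocks₁₂ = -(Sig.toBlocks₁₁ * S12 * S22⁻¹) := by
    have := congrArg (fun M => M * S22⁻¹) h12
    simp only [Matrix.add_mul, Matrix.zero_mul] at this
    rw [Matrix.mul_inv_cancel_right_of_invertible] at this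
    linear_combination (norm := noncomm_ring) this
  have hSchurMul : Sig.toBlocks₁₁ * (S11 - S12 * S22⁻¹ * S21) = 1 := by
    rw [hP12] at h11
    rw [← h11, Matrix.mul_sub]
    simp only [Matrix.neg_mul, ← Matrix.mul_assoc]
    abel
  have hSchur : (Sig.toBlocks₁₁)⁻¹ = S11 - S12 * S22⁻¹ * S21 :=
    Matrix.inv_eq_right_inv hSchurMul
  -- the matrix W and its properties
  set W := S22⁻¹ * Bᵀ * cX with hWdef
  have idW : cY * (cY⁻¹ * S22⁻¹ * Bᵀ * cX) = W := by
    simp only [← Matrix.mul_assoc, Matrix.mul_inv_of_invertible, Matrix.one_mul, hWdef]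
  have idWT : Wᵀ = cX * B * S22⁻¹ := by
    rw [hWdef]
    simp only [Matrix.transpose_mul, Matrix.transpose_transpose, hcXsymm,
      Matrix.transpose_nonsing_inv, hS22symm, Matrix.mul_assoc]
  have hcXB : cX * B = cX * S12 + c12 * S22 := by
    rw [hB, Matrix.mul_add]
    congr 1
    simp only [← Matrix.mul_assoc, Matrix.mul_inv_of_invertible, Matrix.one_mul]
  have e2 : Wᵀ * S21 = cX * S12 * S22⁻¹ * S21 + c12 * S21 := by
    rw [idWT, Matrix.mul_assoc (cX * B), ← Matrix.mul_assoc, hcXB]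
    simp only [Matrix.add_mul, ← Matrix.mul_assoc, Matrix.mul_inv_cancel_right_of_invertible]
  have e1 : cX * ((Sig.toBlocks₁₁)⁻¹ - A) = -(cX * S12 * S22⁻¹ * S21) - c12 * S21 := by
    rw [hSchur, hA]
    simp only [Matrix.mul_sub, Matrix.mul_add, ← Matrix.mul_assoc,
      Matrix.mul_inv_of_invertible, Matrix.one_mul]
    abel
  have hNA : cX * ((Sig.toBlocks₁₁)⁻¹ - A) = -(Wᵀ * S21) := by
    rw [e1, e2]; abel
  have hWS22 : Wᵀ * S22 = cX * B := by
    rw [idWT, Matrix.inv_mul_cancel_right_of_invertible]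
  have htr : (W * S12).trace = (Wᵀ * S21).trace := by
    rw [hS21eq, ← Matrix.transpose_mul, Matrix.trace_transpose, Matrix.trace_mul_comm]
  -- vectors
  set gg := S11 *ᵥ x + S12 *ᵥ y with hggdef
  set hh := S21 *ᵥ x + S22 *ᵥ y with hhhdef
  have hSz : Sig⁻¹ *ᵥ (Sum.elim x y) = Sum.elim gg hh := by
    conv_lhs => rw [← fromBlocks_toBlocks Sig⁻¹]
    rw [fromBlocks_mulVec]
    simp [hggdef, hhhdef]
    rfl
  -- affine representations of the two vector fields
  set N : Matrix (Fin m) (Fin m) ℝ := (1 / 2 : ℝ) • (W * S12) with hNdef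
  set bb : Fin m → ℝ := ((1 / 2 : ℝ) • (W * S11)) *ᵥ x with hbbdef
  set N' : Matrix (Fin d) (Fin d) ℝ := (1 / 2 : ℝ) • (cX * ((Sig.toBlocks₁₁)⁻¹ - A)) with hN'def
  set bb' : Fin d → ℝ := ((-(1 / 2) : ℝ) • (cX * B)) *ᵥ y with hbb'def
  have hvecL : ∀ y' : Fin m → ℝ, cY *ᵥ (ℓY0 x y' - w x y') = N *ᵥ y' + bb := by
    intro y'
    rw [hℓY0, hw, sub_sub_cancel]
    rw [mulVec_smul, mulVec_mulVec, idW, hNdef, hbbdef]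
    rw [mulVec_add, mulVec_mulVec, mulVec_mulVec, smul_add]
    simp only [smul_mulVec]
    rw [add_comm]
  have hvecR : ∀ x' : Fin d → ℝ,
      cX *ᵥ (ℓX x' y + (1 / 2 : ℝ) • ((Sig.toBlocks₁₁)⁻¹ *ᵥ x')) = N' *ᵥ x' + bb' := by
    intro x'
    rw [hℓX, hN'def, hbb'def]
    have lhsv : -((1 / 2 : ℝ) • (A *ᵥ x' + B *ᵥ y)) + (1 / 2 : ℝ) • ((Sig.toBlocks₁₁)⁻¹ *ᵥ x')
        = (1 / 2 : ℝ) • (((Sig.toBlocks₁₁)⁻¹ - A) *ᵥ x') + (-(1 / 2) : ℝ) • (B *ᵥ y) := by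
      rw [Matrix.sub_mulVec]
      module
    rw [lhsv, mulVec_add, mulVec_smul, mulVec_smul, mulVec_mulVec, mulVec_mulVec]
    simp only [smul_mulVec]
  -- compute the LHS summands
  have hL : ∀ j : Fin m,
      fderiv ℝ (fun y' => gaussDensity Sig (Sum.elim x y') *
          (cY *ᵥ (ℓY0 x y' - w x y')) j) y (Pi.single j 1)
        = gaussDensity Sig (Sum.elim x y) * (-(hh j * (N *ᵥ y + bb) j) + N j j) := by
    intro j
    have hfun : (fun y' => gaussDensity Sig (Sum.elim x y') *
        (cY *ᵥ (ℓY0 x y' - w x y')) j)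
        = fun y' => gaussDensity Sig (Sum.elim x (0 : Fin m → ℝ) + inrEmb d m *ᵥ y') *
            ((N *ᵥ y' + bb) j) := by
      funext y'
      rw [hvecL y', inrEmb_mulVec, ← sum_elim_add]
    rw [hfun, fderiv_gauss_affine Sig hSymm _ _ _ _ y j (Pi.single j 1)]
    rw [inrEmb_mulVec, inrEmb_mulVec, ← sum_elim_add, hSz]
    rw [sumElim_dotProduct_sumElim, zero_dotProduct, single_dotProduct, zero_add, one_mul]
    rw [show (N *ᵥ Pi.single j (1 : ℝ)) j = N j j * 1 from dotProduct_single _ _ _]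
    simp only [mul_one]
  have hR : ∀ i : Fin d,
      fderiv ℝ (fun x' => gaussDensity Sig (Sum.elim x' y) *
          (cX *ᵥ (ℓX x' y + (1 / 2 : ℝ) • ((Sig.toBlocks₁₁)⁻¹ *ᵥ x'))) i) x (Pi.single i 1)
        = gaussDensity Sig (Sum.elim x y) * (-(gg i * (N' *ᵥ x + bb') i) + N' i i) := by
    intro i
    have hcomm : ∀ x' : Fin d → ℝ, Sum.elim x' y
        = Sum.elim (0 : Fin d → ℝ) y + inlEmb d m *ᵥ x' := by
      intro x'
      rw [inlEmb_mulVec]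
      ext k; cases k <;> simp
    have hfun : (fun x' => gaussDensity Sig (Sum.elim x' y) *
        (cX *ᵥ (ℓX x' y + (1 / 2 : ℝ) • ((Sig.toBlocks₁₁)⁻¹ *ᵥ x'))) i)
        = fun x' => gaussDensity Sig (Sum.elim (0 : Fin d → ℝ) y + inlEmb d m *ᵥ x') *
            ((N' *ᵥ x' + bb') i) := by
      funext x'
      rw [hvecR x', hcomm x']
    have hxy0 : Sum.elim (0 : Fin d → ℝ) y + Sum.elim x (0 : Fin m → ℝ) = Sum.elim x y := by
      ext k; cases k <;> simp
    rw [hfun, fderiv_gauss_affine Sig hSymm _ _ _ _ x i (Pi.single i 1)]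
    rw [inlEmb_mulVec, inlEmb_mulVec, hxy0, hSz]
    rw [sumElim_dotProduct_sumElim, zero_dotProduct, single_dotProduct, add_zero, one_mul]
    rw [show (N' *ᵥ Pi.single i (1 : ℝ)) i = N' i i * 1 from dotProduct_single _ _ _]
    simp only [mul_one]
  -- assemble
  simp only [hL, hR]
  rw [← Finset.mul_sum, ← Finset.mul_sum, ← mul_neg]
  congr 1
  -- the key algebraic identity
  have hV : N *ᵥ y + bb = (1 / 2 : ℝ) • (W *ᵥ gg) := by
    rw [hNdef, hbbdef, hggdef]
    rw [mulVec_add, mulVec_mulVec, mulVec_mulVec, smul_add]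
    simp only [smul_mulVec]
    rw [add_comm]
  have hU : N' *ᵥ x + bb' = (-(1 / 2) : ℝ) • (Wᵀ *ᵥ hh) := by
    rw [hN'def, hbb'def, hNA, hhhdef]
    rw [mulVec_add, mulVec_mulVec, mulVec_mulVec, ← hWS22, smul_add]
    simp only [smul_mulVec, Matrix.neg_mulVec]
    module
  have hdot : gg ⬝ᵥ (Wᵀ *ᵥ hh) = hh ⬝ᵥ (W *ᵥ gg) := by
    rw [dotProduct_mulVec, vecMul_transpose, dotProduct_comm]
  have hsum1 : ∑ j : Fin m, (-(hh j * (N *ᵥ y + bb) j) + N j j)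
      = -(hh ⬝ᵥ (N *ᵥ y + bb)) + N.trace := by
    rw [Finset.sum_add_distrib, Finset.sum_neg_distrib]
    rfl
  have hsum2 : ∑ i : Fin d, (-(gg i * (N' *ᵥ x + bb') i) + N' i i)
      = -(gg ⬝ᵥ (N' *ᵥ x + bb')) + N'.trace := by
    rw [Finset.sum_add_distrib, Finset.sum_neg_distrib]
    rfl
  rw [hsum1, hsum2, hV, hU, dotProduct_smul, dotProduct_smul, hdot]
  have htrN : N.trace = (1 / 2 : ℝ) * (W * S12).trace := by
    rw [hNdef, Matrix.trace_smul, smul_eq_mul]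
  have htrN' : N'.trace = -((1 / 2 : ℝ) * (W * S12).trace) := by
    rw [hN'def, hNA, Matrix.trace_smul, Matrix.trace_neg, htr, smul_eq_mul]
    ring
  rw [htrN, htrN']
  simp only [smul_eq_mul]
  ring
end

section
/- For the Central Tendency Ornstein–Uhlenbeck specification, the robust growth-optimal strategy coincides with the CTOU growth-optimal strategy: with the stated definitions one has β_Y = −2κ_Y/c_Y, M_X = 2κ_X/c_X and M_Y = −2κ_X/c_X; consequently −½(M_X x + M_Y y) = −(κ_X/c_X)(x − y) for all x, y ∈ ℝ. -/
open Matrix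

/-- For the Central Tendency Ornstein–Uhlenbeck specification
(`d = m = 1`, constant diffusion `c = diag(c_X, c_Y)`, stationary covariance `Σ`,
`β_X = 0`), the robust growth-optimal strategy coincides with the CTOU
growth-optimal strategy: `β_Y = −2κ_Y/c_Y`, `M_X = 2κ_X/c_X`, `M_Y = −2κ_X/c_X`,
and consequently `−½(M_X x + M_Y y) = −(κ_X/c_X)(x − y)` for all `x, y ∈ ℝ`. -/
theorem ctou_robust_strategy
    (cX cY κX κY : ℝ) (hcX : 0 < cX) (hcY : 0 < cY) (hκX : 0 < κX) (hκY : 0 < κY)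
    (q : ℝ) (hq : q = cY * κX / (2 * κY * (κX + κY)))
    (Sig : Matrix (Fin 2) (Fin 2) ℝ)
    (hSig : Sig = !![cX / (2 * κX) + q, q; q, cY / (2 * κY)])
    (βX : ℝ) (hβX : βX = 0)
    (A B C βY MX MY : ℝ)
    (hA : A = Sig⁻¹ 0 0) (hB : B = Sig⁻¹ 0 1) (hC : C = Sig⁻¹ 1 0 + βX)
    (hβY : βY = -(Sig⁻¹ 1 1 + C * Sig 0 1 / Sig 1 1))
    (hMX : MX = A + (cY / cX) * C * Sig⁻¹ 1 0 / Sig⁻¹ 0 0)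
    (hMY : MY = B + (cY / cX) * C * Sig⁻¹ 1 1 / Sig⁻¹ 0 0) :
    βY = -(2 * κY / cY) ∧ MX = 2 * κX / cX ∧ MY = -(2 * κX / cX) ∧
      ∀ x y : ℝ, -(1 / 2 : ℝ) * (MX * x + MY * y) = -(κX / cX) * (x - y) := by
  have hsum : (0:ℝ) < κX + κY := by linarith
  have hE : (0:ℝ) < cX * (κX + κY)^2 + cY * κX^2 := by positivity
  have hEne : cX * (κX + κY)^2 + cY * κX^2 ≠ 0 := ne_of_gt hE
  have hcXne : cX ≠ 0 := ne_of_gt hcX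
  have hcYne : cY ≠ 0 := ne_of_gt hcY
  have hκXne : κX ≠ 0 := ne_of_gt hκX
  have hκYne : κY ≠ 0 := ne_of_gt hκY
  have hsumne : κX + κY ≠ 0 := ne_of_gt hsum
  have hdetval : Sig.det = cY * (cX * (κX + κY)^2 + cY * κX^2) / (4 * κX * κY * (κX + κY)^2) := by
    rw [hSig, Matrix.det_fin_two_of, hq]
    field_simp
    ring
  have hdetne : Sig.det ≠ 0 := by
    rw [hdetval]; positivity
  have hinv : Sig⁻¹ = (Sig.det)⁻¹ • !![cY / (2 * κY), -q; -q, cX / (2 * κX) + q] := by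
    rw [Matrix.inv_def, Ring.inverse_eq_inv, hSig, Matrix.adjugate_fin_two_of]
  have h00 : Sig⁻¹ 0 0 = (cY / (2 * κY)) / Sig.det := by
    rw [hinv]; simp [div_eq_inv_mul]
  have h01 : Sig⁻¹ 0 1 = -q / Sig.det := by
    rw [hinv]; simp [div_eq_inv_mul]
  have h10 : Sig⁻¹ 1 0 = -q / Sig.det := by
    rw [hinv]; simp [div_eq_inv_mul]
  have h11 : Sig⁻¹ 1 1 = (cX / (2 * κX) + q) / Sig.det := by
    rw [hinv]; simp [div_eq_inv_mul]
  have hS01 : Sig 0 1 = q := by rw [hSig]; simp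
  have hS11 : Sig 1 1 = cY / (2 * κY) := by rw [hSig]; simp
  have hβY' : βY = -(2 * κY / cY) := by
    rw [hβY, hC, hβX, h11, h10, hS01, hS11, hdetval, hq]
    field_simp
    ring
  have hMX' : MX = 2 * κX / cX := by
    rw [hMX, hA, hC, hβX, h00, h10, hdetval, hq]
    field_simp
    ring
  have hMY' : MY = -(2 * κX / cX) := by
    rw [hMY, hB, hC, hβX, h01, h10, h11, h00, hdetval, hq]
    field_simp
    ring
  refine ⟨hβY', hMX', hMY', fun x y => ?_⟩
  rw [hMX', hMY']; ring
end

section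
/- In the stochastic volatility model, the function u(x, y) = [ ( −σ³ x³ + 2ρσ² x² y + 4κσ x y² + (3σ³ − 4κνσ) x y − 8κρ y³ + (8κνρ − 2ρσ²) y² ) / (8 σ y²) ] · p(x, y) satisfies, for every x ∈ ℝ and y > 0, the divergence equation ∂u/∂x (x, y) = ∂/∂y ( σ² y · ℓ_Y(x, y) · p(x, y) ), where ℓ_Y(x, y) = x²/(4y²) − 1/(4y) − ρ x/(2σ y). -/
open MeasureTheory Real

/-- In the stochastic volatility model, the explicit function `u`
satisfies the divergence equation `∂u/∂x (x, y) = ∂/∂y ( σ² y ℓ_Y(x, y) p(x, y) )`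
for every `x ∈ ℝ` and `y > 0`. -/
theorem stochastic_volatility_divergence_equation
    (κ ν σ : ℝ) (hκ : 0 < κ) (hν : 0 < ν) (hσ : 0 < σ)
    (hFeller : σ ^ 2 < 2 * κ * ν)
    (ρ : ℝ) (hρ : ρ ∈ Set.Ioo (-1 : ℝ) 1)
    (α β : ℝ) (hα : α = 2 * κ * ν / σ ^ 2) (hβ : β = 2 * κ / σ ^ 2)
    (p : ℝ → ℝ → ℝ)
    (hp : ∀ x y : ℝ, p x y =
      (2 * Real.pi * y) ^ (-(1 : ℝ) / 2) * Real.exp (-(x ^ 2) / (2 * y)) *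
        (β ^ α / Real.Gamma α) * y ^ (α - 1) * Real.exp (-β * y))
    (ℓY : ℝ → ℝ → ℝ)
    (hℓY : ∀ x y : ℝ, ℓY x y = x ^ 2 / (4 * y ^ 2) - 1 / (4 * y) - ρ * x / (2 * σ * y))
    (u : ℝ → ℝ → ℝ)
    (hu : ∀ x y : ℝ, u x y =
      ((-σ ^ 3 * x ^ 3 + 2 * ρ * σ ^ 2 * x ^ 2 * y + 4 * κ * σ * x * y ^ 2
          + (3 * σ ^ 3 - 4 * κ * ν * σ) * x * y - 8 * κ * ρ * y ^ 3
          + (8 * κ * ν * ρ - 2 * ρ * σ ^ 2) * y ^ 2) / (8 * σ * y ^ 2)) * p x y) :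
    ∀ x : ℝ, ∀ y : ℝ, 0 < y →
      deriv (fun x' => u x' y) x = deriv (fun y' => σ ^ 2 * y' * ℓY x y' * p x y') y := by
  intro x y hy
  have hy0 : y ≠ 0 := ne_of_gt hy
  have hσ0 : σ ≠ 0 := ne_of_gt hσ
  have hπ : (0 : ℝ) < Real.pi := Real.pi_pos
  have h2πy : (0 : ℝ) < 2 * Real.pi * y := by positivity
  -- the Gamma-normalization constant
  set C : ℝ := β ^ α / Real.Gamma α with hC
  -- rewrite the left-hand side function
  have hfL : (fun x' => u x' y) = (fun x' : ℝ =>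
      (-σ ^ 3 * x' ^ 3 + 2 * ρ * σ ^ 2 * x' ^ 2 * y + 4 * κ * σ * x' * y ^ 2
        + (3 * σ ^ 3 - 4 * κ * ν * σ) * x' * y - 8 * κ * ρ * y ^ 3
        + (8 * κ * ν * ρ - 2 * ρ * σ ^ 2) * y ^ 2)
      * Real.exp (-(x' ^ 2) / (2 * y))
      * ((2 * Real.pi * y) ^ (-(1 : ℝ) / 2) * C * y ^ (α - 1) * Real.exp (-β * y)
          / (8 * σ * y ^ 2))) := by
    funext x'
    rw [hu, hp]
    ring
  -- rewrite the right-hand side function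
  have hfR : (fun y' => σ ^ 2 * y' * ℓY x y' * p x y') = (fun y' : ℝ =>
      σ ^ 2 * y' * (x ^ 2 / (4 * y' ^ 2) - 1 / (4 * y') - ρ * x / (2 * σ * y'))
      * ((2 * Real.pi * y') ^ (-(1 : ℝ) / 2) * Real.exp (-(x ^ 2) / (2 * y')) * C
          * y' ^ (α - 1) * Real.exp (-β * y'))) := by
    funext y'
    rw [hℓY, hp]
  -- derivative of the exponential factor in x
  have hE : HasDerivAt (fun x' : ℝ => Real.exp (-(x' ^ 2) / (2 * y)))
      (Real.exp (-(x ^ 2) / (2 * y)) * (-(x / y))) x := by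
    have hinner : HasDerivAt (fun x' : ℝ => -(x' ^ 2) / (2 * y)) (-(x / y)) x := by
      have := ((hasDerivAt_pow 2 x).neg).div_const (2 * y)
      refine this.congr_deriv ?_
      field_simp
      ring
    exact hinner.exp
  -- derivative of the polynomial factor in x
  have hpoly : HasDerivAt (fun x' : ℝ =>
      -σ ^ 3 * x' ^ 3 + 2 * ρ * σ ^ 2 * x' ^ 2 * y + 4 * κ * σ * x' * y ^ 2
        + (3 * σ ^ 3 - 4 * κ * ν * σ) * x' * y - 8 * κ * ρ * y ^ 3
        + (8 * κ * ν * ρ - 2 * ρ * σ ^ 2) * y ^ 2)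
      (-3 * σ ^ 3 * x ^ 2 + 4 * ρ * σ ^ 2 * x * y + 4 * κ * σ * y ^ 2
        + (3 * σ ^ 3 - 4 * κ * ν * σ) * y) x := by
    have h3 : HasDerivAt (fun x' : ℝ => x' ^ 3) (3 * x ^ 2) x := by
      simpa using hasDerivAt_pow 3 x
    have h2 : HasDerivAt (fun x' : ℝ => x' ^ 2) (2 * x) x := by
      simpa using hasDerivAt_pow 2 x
    have h1 : HasDerivAt (fun x' : ℝ => x') 1 x := hasDerivAt_id x
    have := (((((h3.const_mul (-σ ^ 3)).add
        ((h2.const_mul (2 * ρ * σ ^ 2)).mul_const y)).add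
        ((h1.const_mul (4 * κ * σ)).mul_const (y ^ 2))).add
        ((h1.const_mul (3 * σ ^ 3 - 4 * κ * ν * σ)).mul_const y)).sub_const
        (8 * κ * ρ * y ^ 3)).add_const ((8 * κ * ν * ρ - 2 * ρ * σ ^ 2) * y ^ 2)
    exact this.congr_deriv (by ring)
  -- left-hand side derivative
  have hL : HasDerivAt (fun x' : ℝ =>
      (-σ ^ 3 * x' ^ 3 + 2 * ρ * σ ^ 2 * x' ^ 2 * y + 4 * κ * σ * x' * y ^ 2
        + (3 * σ ^ 3 - 4 * κ * ν * σ) * x' * y - 8 * κ * ρ * y ^ 3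
        + (8 * κ * ν * ρ - 2 * ρ * σ ^ 2) * y ^ 2)
      * Real.exp (-(x' ^ 2) / (2 * y))
      * ((2 * Real.pi * y) ^ (-(1 : ℝ) / 2) * C * y ^ (α - 1) * Real.exp (-β * y)
          / (8 * σ * y ^ 2)))
      (((-3 * σ ^ 3 * x ^ 2 + 4 * ρ * σ ^ 2 * x * y + 4 * κ * σ * y ^ 2
          + (3 * σ ^ 3 - 4 * κ * ν * σ) * y)
        + (-σ ^ 3 * x ^ 3 + 2 * ρ * σ ^ 2 * x ^ 2 * y + 4 * κ * σ * x * y ^ 2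
          + (3 * σ ^ 3 - 4 * κ * ν * σ) * x * y - 8 * κ * ρ * y ^ 3
          + (8 * κ * ν * ρ - 2 * ρ * σ ^ 2) * y ^ 2) * (-(x / y)))
        * Real.exp (-(x ^ 2) / (2 * y))
        * ((2 * Real.pi * y) ^ (-(1 : ℝ) / 2) * C * y ^ (α - 1) * Real.exp (-β * y)
            / (8 * σ * y ^ 2))) x := by
    exact ((hpoly.mul hE).mul_const _).congr_deriv (by ring)
  -- derivative of the rpow factor (2πy')^(-1/2)
  have hG : HasDerivAt (fun y' : ℝ => (2 * Real.pi * y') ^ (-(1 : ℝ) / 2))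
      ((2 * Real.pi * y) ^ (-(1 : ℝ) / 2) * (-(1 / (2 * y)))) y := by
    have hin : HasDerivAt (fun y' : ℝ => 2 * Real.pi * y') (2 * Real.pi) y := by
      simpa using (hasDerivAt_id y).const_mul (2 * Real.pi)
    have hout := Real.hasDerivAt_rpow_const (x := 2 * Real.pi * y) (p := -(1 : ℝ) / 2)
      (Or.inl (ne_of_gt h2πy))
    have h := hout.comp y hin
    refine (h.congr_deriv ?_)
    rw [show (-(1 : ℝ) / 2 - 1) = (-(1 : ℝ) / 2) - 1 by norm_num,
      Real.rpow_sub h2πy, Real.rpow_one]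
    field_simp
  -- derivative of y'^(α-1)
  have hS : HasDerivAt (fun y' : ℝ => y' ^ (α - 1))
      (y ^ (α - 1) * ((α - 1) / y)) y := by
    have h := Real.hasDerivAt_rpow_const (x := y) (p := α - 1) (Or.inl hy0)
    refine h.congr_deriv ?_
    rw [show (α - 1 - 1) = (α - 1) - 1 by ring, Real.rpow_sub hy, Real.rpow_one]
    field_simp
  -- derivative of exp(-x²/(2y'))
  have hE2 : HasDerivAt (fun y' : ℝ => Real.exp (-(x ^ 2) / (2 * y')))
      (Real.exp (-(x ^ 2) / (2 * y)) * (x ^ 2 / (2 * y ^ 2))) y := by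
    have hd : HasDerivAt (fun y' : ℝ => 2 * y') 2 y := by
      simpa using (hasDerivAt_id y).const_mul 2
    have hinner := (hasDerivAt_const y (-(x ^ 2))).div hd (by positivity)
    have hinner' : HasDerivAt (fun y' : ℝ => -(x ^ 2) / (2 * y')) (x ^ 2 / (2 * y ^ 2)) y := by
      refine hinner.congr_deriv ?_
      field_simp
      ring
    exact hinner'.exp
  -- derivative of exp(-βy')
  have hB : HasDerivAt (fun y' : ℝ => Real.exp (-β * y'))
      (Real.exp (-β * y) * (-β)) y := by
    have hd : HasDerivAt (fun y' : ℝ => -β * y') (-β) y := by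
      simpa using (hasDerivAt_id y).const_mul (-β)
    exact hd.exp
  -- derivative of the density factor in y
  have hP : HasDerivAt (fun y' : ℝ =>
      (2 * Real.pi * y') ^ (-(1 : ℝ) / 2) * Real.exp (-(x ^ 2) / (2 * y')) * C
        * y' ^ (α - 1) * Real.exp (-β * y'))
      (((2 * Real.pi * y) ^ (-(1 : ℝ) / 2) * Real.exp (-(x ^ 2) / (2 * y)) * C
        * y ^ (α - 1) * Real.exp (-β * y))
        * (-(1 / (2 * y)) + x ^ 2 / (2 * y ^ 2) + (α - 1) / y - β)) y := by
    exact ((((hG.mul hE2).mul_const C).mul hS).mul hB).congr_deriv (by simp only [Pi.mul_apply]; ring)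
  -- derivative of the ℓY factor in y
  have hl : HasDerivAt (fun y' : ℝ =>
      x ^ 2 / (4 * y' ^ 2) - 1 / (4 * y') - ρ * x / (2 * σ * y'))
      (-(x ^ 2) / (2 * y ^ 3) + 1 / (4 * y ^ 2) + ρ * x / (2 * σ * y ^ 2)) y := by
    have hA : HasDerivAt (fun y' : ℝ => x ^ 2 / (4 * y' ^ 2)) (-(x ^ 2) / (2 * y ^ 3)) y := by
      have hd : HasDerivAt (fun y' : ℝ => 4 * y' ^ 2) (8 * y) y := by
        have := (hasDerivAt_pow 2 y).const_mul 4
        exact this.congr_deriv (by push_cast; ring)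
      refine ((hasDerivAt_const y (x ^ 2)).div hd (by positivity)).congr_deriv ?_
      field_simp
      ring
    have hB1 : HasDerivAt (fun y' : ℝ => 1 / (4 * y')) (-(1 / (4 * y ^ 2))) y := by
      have hd : HasDerivAt (fun y' : ℝ => 4 * y') 4 y := by
        simpa using (hasDerivAt_id y).const_mul 4
      refine ((hasDerivAt_const y (1 : ℝ)).div hd (by positivity)).congr_deriv ?_
      field_simp
      ring
    have hB2 : HasDerivAt (fun y' : ℝ => ρ * x / (2 * σ * y')) (-(ρ * x / (2 * σ * y ^ 2))) y := by
      have hd : HasDerivAt (fun y' : ℝ => 2 * σ * y') (2 * σ) y := by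
        simpa using (hasDerivAt_id y).const_mul (2 * σ)
      have hne : 2 * σ * y ≠ 0 := by positivity
      refine ((hasDerivAt_const y (ρ * x)).div hd hne).congr_deriv ?_
      field_simp
      ring
    exact ((hA.sub hB1).sub hB2).congr_deriv (by ring)
  -- derivative of the linear factor in y
  have hlin : HasDerivAt (fun y' : ℝ => σ ^ 2 * y') (σ ^ 2) y := by
    simpa using (hasDerivAt_id y).const_mul (σ ^ 2)
  -- right-hand side derivative
  have hR : HasDerivAt (fun y' : ℝ =>
      σ ^ 2 * y' * (x ^ 2 / (4 * y' ^ 2) - 1 / (4 * y') - ρ * x / (2 * σ * y'))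
      * ((2 * Real.pi * y') ^ (-(1 : ℝ) / 2) * Real.exp (-(x ^ 2) / (2 * y')) * C
          * y' ^ (α - 1) * Real.exp (-β * y')))
      ((σ ^ 2 * (x ^ 2 / (4 * y ^ 2) - 1 / (4 * y) - ρ * x / (2 * σ * y))
          + σ ^ 2 * y * (-(x ^ 2) / (2 * y ^ 3) + 1 / (4 * y ^ 2) + ρ * x / (2 * σ * y ^ 2)))
        * ((2 * Real.pi * y) ^ (-(1 : ℝ) / 2) * Real.exp (-(x ^ 2) / (2 * y)) * C
          * y ^ (α - 1) * Real.exp (-β * y))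
        + σ ^ 2 * y * (x ^ 2 / (4 * y ^ 2) - 1 / (4 * y) - ρ * x / (2 * σ * y))
          * (((2 * Real.pi * y) ^ (-(1 : ℝ) / 2) * Real.exp (-(x ^ 2) / (2 * y)) * C
            * y ^ (α - 1) * Real.exp (-β * y))
            * (-(1 / (2 * y)) + x ^ 2 / (2 * y ^ 2) + (α - 1) / y - β))) y := by
    exact ((hlin.mul hl).mul hP).congr_deriv (by simp only [Pi.mul_apply])
  rw [hfL, hfR, hL.deriv, hR.deriv]
  subst hα hβ
  have hG0 : (2 * Real.pi * y) ^ (-(1 : ℝ) / 2) ≠ 0 := by positivity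
  field_simp
  ring
end
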